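/- Assume Hypotheses (H). Fix t ∈ I and λ > max(M_{{t}}, λ_{{t}}), where M_{{t}} := max_k sup_{x∈ℝ^d} Σ_j c^P_{kj}(t,x) and λ_{{t}} is the constant from Hypothesis (H)(iii) for the interval J = {t}. If u : ℝ^d → ℝ^m is bounded, twice continuously differentiable and satisfies λ u(x) − (𝒜^P(t)u)(x) ≤ 0 componentwise for every x ∈ ℝ^d, then u(x) ≤ 0 componentwise for every x ∈ ℝ^d. -/

import Mathlib

open Set Filter Metric MeasureTheory
open scoped BigOperators Topology

noncomputable section

/-- Euclidean space `ℝ^d`. -/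
abbrev Euc (d : ℕ) := EuclideanSpace ℝ (Fin d)

variable {d m : ℕ}

/-- First-order spatial partial derivative. -/
def pd (i : Fin d) (f : Euc d → ℝ) (x : Euc d) : ℝ :=
  fderiv ℝ f x (EuclideanSpace.single i 1)

/-- Second-order spatial partial derivative. -/
def pd2 (i j : Fin d) (f : Euc d → ℝ) (x : Euc d) : ℝ :=
  fderiv ℝ (fun y => pd j f y) x (EuclideanSpace.single i 1)

/-- The weakly coupled elliptic operator `𝒜(t)` with diffusion coefficients `Q`,
drift coefficients `b` and potential matrix `c`, acting on `ζ : ℝ^d → ℝ^m`. -/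
def opA (Q : Fin m → ℝ → Euc d → Fin d → Fin d → ℝ)
    (b : Fin m → ℝ → Euc d → Fin d → ℝ)
    (c : ℝ → Euc d → Fin m → Fin m → ℝ)
    (t : ℝ) (ζ : Euc d → Fin m → ℝ) (x : Euc d) (k : Fin m) : ℝ :=
  (∑ i, ∑ j, Q k t x i j * pd2 i j (fun y => ζ y k) x)
    + (∑ j, b k t x j * pd j (fun y => ζ y k) x)
    + (∑ h, c t x k h * ζ x h)

/-- The matrix `C^P`: diagonal entries of `C`, absolute values off the diagonal. -/
def CP (c : ℝ → Euc d → Fin m → Fin m → ℝ) :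
    ℝ → Euc d → Fin m → Fin m → ℝ :=
  fun t x k h => if k = h then c t x k h else |c t x k h|

/-- Smallest eigenvalue of a (symmetric) matrix, via the Rayleigh quotient. -/
def minEig (A : Fin d → Fin d → ℝ) : ℝ :=
  sInf {r : ℝ | ∃ ξ : Euc d, ‖ξ‖ = 1 ∧ r = ∑ i, ∑ j, A i j * ξ i * ξ j}

/-- Local parabolic `(α/2, α)`-Hölder continuity on `I × ℝ^d`. -/
def LocParHolder {F : Type*} [NormedAddCommGroup F] (α : ℝ) (I : Set ℝ)
    (f : ℝ → Euc d → F) : Prop :=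
  ∀ K : Set (ℝ × Euc d), K ⊆ I ×ˢ (univ : Set (Euc d)) → IsCompact K →
    ∃ L : ℝ, ∀ p ∈ K, ∀ q ∈ K,
      ‖f p.1 p.2 - f q.1 q.2‖ ≤ L * (|p.1 - q.1| ^ (α / 2) + ‖p.2 - q.2‖ ^ α)

/-- `I` is a right half-line (possibly all of `ℝ`). -/
def IsRightHalfline (I : Set ℝ) : Prop := (∃ a, I = Ici a) ∨ I = univ

/-- Hypotheses (H). -/
structure Hyp (I : Set ℝ)
    (Q : Fin m → ℝ → Euc d → Fin d → Fin d → ℝ)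
    (b : Fin m → ℝ → Euc d → Fin d → ℝ)
    (c : ℝ → Euc d → Fin m → Fin m → ℝ) : Prop where
  symm : ∀ k t x i j, Q k t x i j = Q k t x j i
  holder : ∃ α ∈ Ioo (0:ℝ) 1,
      (∀ k i j, LocParHolder α I (fun t x => Q k t x i j)) ∧
      (∀ k j, LocParHolder α I (fun t x => b k t x j)) ∧
      (∀ k h, LocParHolder α I (fun t x => c t x k h))
  ellipt : ∀ J : Set ℝ, J ⊆ I → Bornology.IsBounded J →
      ∀ k, ∃ μ0 > 0, ∀ t ∈ J, ∀ x : Euc d, μ0 ≤ minEig (Q k t x)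
  lyap : ∀ J : Set ℝ, J ⊆ I → Bornology.IsBounded J →
      ∃ φ : Euc d → Fin m → ℝ, ∃ lam > 0,
        (∀ k, ContDiff ℝ 2 (fun x => φ x k)) ∧
        (∀ x k, 0 < φ x k) ∧
        (∀ k, Tendsto (fun x => φ x k) (cocompact (Euc d)) atTop) ∧
        (∀ t ∈ J, ∀ x k, opA Q b (CP c) t φ x k ≤ lam * φ x k)
  irred : ¬ ∃ K : Set (Fin m), K.Nonempty ∧ K ≠ univ ∧
      ∀ i ∈ K, ∀ j ∉ K, ∀ t ∈ I, ∀ x : Euc d, c t x i j = 0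
  rowBdd : ∀ J : Set ℝ, J ⊆ I → Bornology.IsBounded J →
      ∃ M : ℝ, ∀ t ∈ J, ∀ x : Euc d, ∀ k, (∑ j, CP c t x k j) ≤ M

/-- `f` is bounded and continuous (membership in `C_b(ℝ^d; ℝ^m)`). -/
def IsBddContinuous (f : Euc d → Fin m → ℝ) : Prop :=
  Continuous f ∧ ∃ F, ∀ x k, |f x k| ≤ F

/-- Classical solution of the Cauchy problem for the operator with coefficients
`Q, b, c`, datum `f` at time `s`. -/
def ClassicalSol (Q : Fin m → ℝ → Euc d → Fin d → Fin d → ℝ)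
    (b : Fin m → ℝ → Euc d → Fin d → ℝ)
    (c : ℝ → Euc d → Fin m → Fin m → ℝ)
    (s : ℝ) (f : Euc d → Fin m → ℝ) (u : ℝ → Euc d → Fin m → ℝ) : Prop :=
  ContinuousOn (fun p : ℝ × Euc d => u p.1 p.2) (Ici s ×ˢ (univ : Set (Euc d))) ∧
  (∀ x, u s x = f x) ∧
  (∀ t ∈ Ioi s, ∀ k, ContDiff ℝ 2 (fun x => u t x k)) ∧
  (∀ t ∈ Ioi s, ∀ x k, HasDerivAt (fun r => u r x k) (opA Q b c t (u t) x k) t)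

/-- Bounded on every strip `[s,T] × ℝ^d`. -/
def BddOnStrips (s : ℝ) (u : ℝ → Euc d → Fin m → ℝ) : Prop :=
  ∀ T > s, ∃ K, ∀ t ∈ Icc s T, ∀ x k, |u t x k| ≤ K

/-! ### Auxiliary lemmas -/


/-- Expansion of a continuous linear map against the standard coordinates. -/
lemma clm_expand {W : Type*} [NormedAddCommGroup W] [NormedSpace ℝ W]
    (T : Euc d →L[ℝ] W) (ξ : Euc d) :
    T ξ = ∑ j, ξ j • T (EuclideanSpace.single j 1) := by
  have h : ξ = ∑ j, ξ j • EuclideanSpace.single j (1:ℝ) := by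
    ext i
    rw [show ((∑ j, ξ j • EuclideanSpace.single j (1:ℝ)) i)
        = ∑ j, (ξ j • EuclideanSpace.single j (1:ℝ)) i from
      by rw [WithLp.ofLp_sum, Finset.sum_apply]]
    simp only [PiLp.smul_apply, EuclideanSpace.single_apply, smul_eq_mul,
      mul_ite, mul_one, mul_zero]
    simp
  calc T ξ = T (∑ j, ξ j • EuclideanSpace.single j (1:ℝ)) := by rw [← h]
    _ = ∑ j, ξ j • T (EuclideanSpace.single j 1) := by
        rw [map_sum]; simp

lemma pd_comb {f g : Euc d → ℝ} (hf : Differentiable ℝ f) (hg : Differentiable ℝ g)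
    (ε : ℝ) (j : Fin d) (x : Euc d) :
    pd j (fun y => f y - ε * g y) x = pd j f x - ε * pd j g x := by
  unfold pd
  rw [fderiv_fun_sub (hf x) ((hg x).const_mul ε), fderiv_const_mul (hg x) ε]
  simp

lemma contDiff_pd {f : Euc d → ℝ} (hf : ContDiff ℝ 2 f) (j : Fin d) :
    ContDiff ℝ 1 (fun y => pd j f y) := by
  have h1 : ContDiff ℝ 1 (fderiv ℝ f) := hf.fderiv_right (by norm_num)
  exact h1.clm_apply contDiff_const

lemma pd2_comb {f g : Euc d → ℝ} (hf : ContDiff ℝ 2 f) (hg : ContDiff ℝ 2 g)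
    (ε : ℝ) (i j : Fin d) (x : Euc d) :
    pd2 i j (fun y => f y - ε * g y) x = pd2 i j f x - ε * pd2 i j g x := by
  have hfd : Differentiable ℝ f := hf.differentiable (by norm_num)
  have hgd : Differentiable ℝ g := hg.differentiable (by norm_num)
  have hpf : DifferentiableAt ℝ (fun y => pd j f y) x :=
    ((contDiff_pd hf j).differentiable one_ne_zero) x
  have hpg : DifferentiableAt ℝ (fun y => pd j g y) x :=
    ((contDiff_pd hg j).differentiable one_ne_zero) x
  unfold pd2
  have hfun : (fun y => pd j (fun z => f z - ε * g z) y)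
      = fun y => pd j f y - ε * pd j g y := by
    funext y; exact pd_comb hfd hgd ε j y
  rw [hfun, fderiv_fun_sub hpf (hpg.const_mul ε), fderiv_const_mul hpg ε]
  simp

lemma pd_eq_zero_of_max {f : Euc d → ℝ} {x0 : Euc d}
    (hmax : ∀ y, f y ≤ f x0) (j : Fin d) : pd j f x0 = 0 := by
  have h : IsLocalMax f x0 := Filter.Eventually.of_forall (fun y => hmax y)
  unfold pd
  rw [h.fderiv_eq_zero]
  simp

lemma second_deriv_test {g : ℝ → ℝ} (hg : ContDiff ℝ 2 g)
    (hmax : ∀ s, g s ≤ g 0) : deriv (deriv g) 0 ≤ 0 := by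
  by_contra h
  push_neg at h
  set D := deriv (deriv g) 0 with hD
  have hg1 : ContDiff ℝ 1 (deriv g) := by
    rw [show (2 : WithTop ℕ∞) = 1 + 1 from rfl] at hg
    exact (contDiff_succ_iff_deriv.mp hg).2.2
  have hgd : Differentiable ℝ g := hg.differentiable (by norm_num)
  have hd0 : deriv g 0 = 0 := by
    have : IsLocalMax g 0 := Filter.Eventually.of_forall hmax
    exact this.deriv_eq_zero
  have hder : HasDerivAt (deriv g) D 0 :=
    ((hg1.differentiable one_ne_zero) 0).hasDerivAt
  rw [hasDerivAt_iff_tendsto_slope] at hder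
  have hev : ∀ᶠ s in 𝓝[≠] (0:ℝ), 0 < slope (deriv g) 0 s :=
    hder.eventually (eventually_gt_nhds h)
  rw [eventually_nhdsWithin_iff] at hev
  rcases Metric.eventually_nhds_iff.mp hev with ⟨δ, hδ, hball⟩
  set s := δ/2 with hs
  have hs0 : 0 < s := by positivity
  have hpos : ∀ r ∈ Set.Ioo (0:ℝ) δ, 0 < deriv g r := by
    intro r hr
    have h1 : 0 < slope (deriv g) 0 r := by
      apply hball (by rw [Real.dist_eq, sub_zero, abs_of_pos hr.1]; exact hr.2)
      simp [hr.1.ne']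
    rw [slope_def_field, hd0, sub_zero, sub_zero, div_pos_iff] at h1
    rcases h1 with ⟨h1, _⟩ | ⟨_, h2⟩
    · exact h1
    · linarith [hr.1]
  obtain ⟨c, hc, hceq⟩ := exists_hasDerivAt_eq_slope g (deriv g) hs0
    (hgd.continuous.continuousOn) (fun x _ => (hgd x).hasDerivAt)
  have hc' : 0 < deriv g c :=
    hpos c ⟨hc.1, by have h2 := hc.2; have : s = δ/2 := hs; linarith⟩
  rw [hceq] at hc'
  have := hmax s
  rw [div_pos_iff] at hc'
  rcases hc' with ⟨h1, _⟩ | ⟨_, h2⟩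
  · linarith
  · linarith

lemma pd2_eq_second_fderiv {f : Euc d → ℝ} (hf : ContDiff ℝ 2 f)
    (i j : Fin d) (x : Euc d) :
    pd2 i j f x = (fderiv ℝ (fderiv ℝ f) x (EuclideanSpace.single i 1))
      (EuclideanSpace.single j 1) := by
  have h1 : ContDiff ℝ 1 (fderiv ℝ f) := hf.fderiv_right (by norm_num)
  have hc : DifferentiableAt ℝ (fderiv ℝ f) x := (h1.differentiable one_ne_zero) x
  unfold pd2 pd
  rw [fderiv_clm_apply hc (differentiableAt_const _)]
  simp

lemma hess_quadform_nonpos {f : Euc d → ℝ} (hf : ContDiff ℝ 2 f) {x0 : Euc d}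
    (hmax : ∀ y, f y ≤ f x0) (ξ : Euc d) :
    ∑ i, ∑ j, ξ i * ξ j * pd2 i j f x0 ≤ 0 := by
  have hfd : Differentiable ℝ f := hf.differentiable (by norm_num)
  have h1 : ContDiff ℝ 1 (fderiv ℝ f) := hf.fderiv_right (by norm_num)
  have hfd2 : Differentiable ℝ (fderiv ℝ f) := h1.differentiable one_ne_zero
  set ℓ : ℝ → Euc d := fun s => x0 + s • ξ with hℓ
  have hℓ0 : ℓ 0 = x0 := by simp [hℓ]
  have hℓd : ∀ s, HasDerivAt ℓ ξ s := by
    intro s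
    exact (((hasDerivAt_id s).smul_const ξ).const_add x0).congr_deriv (one_smul ℝ ξ)
  set g : ℝ → ℝ := fun s => f (ℓ s) with hg
  have hgc : ContDiff ℝ 2 g := by
    apply hf.comp
    exact contDiff_const.add (contDiff_id.smul contDiff_const)
  have hgmax : ∀ s, g s ≤ g 0 := by
    intro s; rw [hg]; simp only [hℓ0]; exact hmax _
  have hd1 : ∀ s, HasDerivAt g (fderiv ℝ f (ℓ s) ξ) s := by
    intro s
    exact (hfd (ℓ s)).hasFDerivAt.comp_hasDerivAt s (hℓd s)
  have hderg : deriv g = fun s => fderiv ℝ f (ℓ s) ξ := by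
    funext s; exact (hd1 s).deriv
  set F2 := fderiv ℝ (fderiv ℝ f) x0 with hF2
  have hd2 : HasDerivAt (fun s => fderiv ℝ f (ℓ s) ξ) ((F2 ξ) ξ) 0 := by
    have hcomp : HasDerivAt (fun s => fderiv ℝ f (ℓ s)) (F2 ξ) 0 := by
      have h0 : HasFDerivAt (fderiv ℝ f) F2 (ℓ 0) := by
        rw [hℓ0]; exact (hfd2 x0).hasFDerivAt
      exact h0.comp_hasDerivAt 0 (hℓd 0)
    have := hcomp.clm_apply (hasDerivAt_const 0 ξ)
    simpa using this
  have hd2' : deriv (deriv g) 0 = (F2 ξ) ξ := by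
    rw [hderg]; exact hd2.deriv
  have hle : (F2 ξ) ξ ≤ 0 := by
    rw [← hd2']; exact second_deriv_test hgc hgmax
  have hexp : (F2 ξ) ξ = ∑ i, ∑ j, ξ i * ξ j * pd2 i j f x0 := by
    calc (F2 ξ) ξ = (∑ i, ξ i • F2 (EuclideanSpace.single i 1)) ξ := by
          rw [← clm_expand]
      _ = ∑ i, ξ i * ((F2 (EuclideanSpace.single i 1)) ξ) := by
          rw [ContinuousLinearMap.sum_apply]; simp
      _ = ∑ i, ∑ j, ξ i * ξ j * pd2 i j f x0 := by
          apply Finset.sum_congr rfl; intro i _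
          rw [clm_expand (F2 (EuclideanSpace.single i 1)) ξ, Finset.mul_sum]
          apply Finset.sum_congr rfl; intro j _
          rw [pd2_eq_second_fderiv hf]
          simp; ring
  rw [← hexp]; exact hle

open scoped MatrixOrder in
lemma trace_QH_nonpos (Q H : Fin d → Fin d → ℝ)
    (hQs : ∀ i j, Q i j = Q j i)
    (hQpsd : ∀ ξ : Fin d → ℝ, 0 ≤ ∑ i, ∑ j, Q i j * ξ i * ξ j)
    (hH : ∀ ξ : Fin d → ℝ, ∑ i, ∑ j, ξ i * ξ j * H i j ≤ 0) :
    ∑ i, ∑ j, Q i j * H i j ≤ 0 := by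
  set MQ : Matrix (Fin d) (Fin d) ℝ := Matrix.of Q with hMQ
  have hherm : MQ.IsHermitian := by
    ext i j
    simp [hMQ, Matrix.conjTranspose_apply, hQs j i]
  have hpsd : MQ.PosSemidef := by
    refine Matrix.PosSemidef.of_dotProduct_mulVec_nonneg hherm fun x => ?_
    have := hQpsd x
    simp only [dotProduct, Matrix.mulVec, star_trivial]
    calc (0:ℝ) ≤ ∑ i, ∑ j, Q i j * x i * x j := this
      _ = ∑ i, x i * ∑ j, Q i j * x j := by
          apply Finset.sum_congr rfl; intro i _
          rw [Finset.mul_sum, Finset.sum_congr rfl]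
          intro j _; ring
  set S := CFC.sqrt MQ with hS
  have hS2 : S * S = MQ := CFC.sqrt_mul_sqrt_self MQ hpsd.nonneg
  have hSh : Matrix.transpose S = S := by
    have := (Matrix.nonneg_iff_posSemidef.mp (CFC.sqrt_nonneg MQ)).isHermitian
    exact (by simpa [Matrix.conjTranspose] using this : S.IsSymm)
  have key : ∑ i, ∑ j, Q i j * H i j = ∑ k, ∑ i, ∑ j, (S k i) * (S k j) * H i j := by
    calc ∑ i, ∑ j, Q i j * H i j
        = ∑ i, ∑ j, (∑ k, S i k * S k j) * H i j := by
          apply Finset.sum_congr rfl; intro i _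
          apply Finset.sum_congr rfl; intro j _
          congr 1
          have : MQ i j = (S * S) i j := by rw [hS2]
          simpa [Matrix.mul_apply, hMQ] using this
      _ = ∑ i, ∑ j, ∑ k, S i k * S k j * H i j := by
          apply Finset.sum_congr rfl; intro i _
          apply Finset.sum_congr rfl; intro j _
          rw [Finset.sum_mul]
      _ = ∑ i, ∑ k, ∑ j, S i k * S k j * H i j := by
          apply Finset.sum_congr rfl; intro i _
          rw [Finset.sum_comm]
      _ = ∑ k, ∑ i, ∑ j, S i k * S k j * H i j := Finset.sum_comm
      _ = ∑ k, ∑ i, ∑ j, (S k i) * (S k j) * H i j := by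
          apply Finset.sum_congr rfl; intro k _
          apply Finset.sum_congr rfl; intro i _
          apply Finset.sum_congr rfl; intro j _
          have h1 : S i k = S k i := by
            have := congrFun (congrFun hSh i) k
            simpa [Matrix.transpose_apply] using this.symm
          rw [h1]
  rw [key]
  apply Finset.sum_nonpos
  intro k _
  exact hH (fun i => S k i)

lemma coord_le_norm (ξ : Euc d) (i : Fin d) : |ξ i| ≤ ‖ξ‖ := by
  rw [EuclideanSpace.norm_eq]
  have h1 : |ξ i| = Real.sqrt (ξ i ^ 2) := by
    rw [Real.sqrt_sq_eq_abs]
  rw [h1]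
  apply Real.sqrt_le_sqrt
  have : ξ i ^ 2 ≤ ∑ j, ξ j ^ 2 :=
    Finset.single_le_sum (f := fun j => ξ j ^ 2) (fun j _ => sq_nonneg _) (Finset.mem_univ i)
  simpa [sq_abs] using this

lemma psd_of_minEig (A : Fin d → Fin d → ℝ) {μ0 : ℝ}
    (hμ : 0 < μ0) (hmin : μ0 ≤ minEig A) :
    ∀ ξ : Fin d → ℝ, 0 ≤ ∑ i, ∑ j, A i j * ξ i * ξ j := by
  have hbdd : BddBelow {r : ℝ | ∃ ξ : Euc d, ‖ξ‖ = 1 ∧ r = ∑ i, ∑ j, A i j * ξ i * ξ j} := by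
    refine ⟨-(∑ i, ∑ j, |A i j|), ?_⟩
    rintro r ⟨ξ, hξ, rfl⟩
    have habs : |∑ i, ∑ j, A i j * ξ i * ξ j| ≤ ∑ i, ∑ j, |A i j| := by
      calc |∑ i, ∑ j, A i j * ξ i * ξ j| ≤ ∑ i, |∑ j, A i j * ξ i * ξ j| :=
            Finset.abs_sum_le_sum_abs _ _
        _ ≤ ∑ i, ∑ j, |A i j * ξ i * ξ j| := by
            apply Finset.sum_le_sum; intro i _; exact Finset.abs_sum_le_sum_abs _ _
        _ ≤ ∑ i, ∑ j, |A i j| := by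
            apply Finset.sum_le_sum; intro i _
            apply Finset.sum_le_sum; intro j _
            rw [abs_mul, abs_mul]
            have h1 : |ξ i| ≤ 1 := hξ ▸ coord_le_norm ξ i
            have h2 : |ξ j| ≤ 1 := hξ ▸ coord_le_norm ξ j
            calc |A i j| * |ξ i| * |ξ j| ≤ |A i j| * 1 * 1 := by
                  apply mul_le_mul (mul_le_mul le_rfl h1 (abs_nonneg _) (abs_nonneg _)) h2
                    (abs_nonneg _) (by positivity)
              _ = |A i j| := by ring
    linarith [abs_nonneg (∑ i, ∑ j, A i j * ξ i * ξ j),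
      neg_abs_le (∑ i, ∑ j, A i j * ξ i * ξ j), habs]
  intro ξ
  by_cases hz : ξ = 0
  · simp [hz]
  · set x : Euc d := (WithLp.equiv 2 (Fin d → ℝ)).symm ξ with hx
    have hxne : x ≠ 0 := by
      intro h; apply hz
      have := congrArg (WithLp.equiv 2 (Fin d → ℝ)) h
      simpa [hx] using this
    have hn : 0 < ‖x‖ := norm_pos_iff.mpr hxne
    set ζ : Euc d := ‖x‖⁻¹ • x with hζ
    have hζn : ‖ζ‖ = 1 := norm_smul_inv_norm hxne
    have hcoord : ∀ i, ζ i = ‖x‖⁻¹ * ξ i := by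
      intro i
      rw [hζ, PiLp.smul_apply]
      simp [hx]
    have hmem : (∑ i, ∑ j, A i j * ζ i * ζ j) ∈
        {r : ℝ | ∃ ξ : Euc d, ‖ξ‖ = 1 ∧ r = ∑ i, ∑ j, A i j * ξ i * ξ j} :=
      ⟨ζ, hζn, rfl⟩
    have hle : μ0 ≤ ∑ i, ∑ j, A i j * ζ i * ζ j :=
      le_trans hmin (csInf_le hbdd hmem)
    have hpos : 0 < ∑ i, ∑ j, A i j * ζ i * ζ j := lt_of_lt_of_le hμ hle
    have hkey : ∑ i, ∑ j, A i j * ξ i * ξ j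
        = ‖x‖^2 * ∑ i, ∑ j, A i j * ζ i * ζ j := by
      rw [Finset.mul_sum]
      apply Finset.sum_congr rfl; intro i _
      rw [Finset.mul_sum]
      apply Finset.sum_congr rfl; intro j _
      rw [hcoord i, hcoord j]
      field_simp
    rw [hkey]
    positivity

lemma opA_comb (Q : Fin m → ℝ → Euc d → Fin d → Fin d → ℝ)
    (b : Fin m → ℝ → Euc d → Fin d → ℝ)
    (c : ℝ → Euc d → Fin m → Fin m → ℝ) (t : ℝ)
    {u φ : Euc d → Fin m → ℝ} (ε : ℝ)
    (hu : ∀ k, ContDiff ℝ 2 (fun x => u x k))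
    (hφ : ∀ k, ContDiff ℝ 2 (fun x => φ x k))
    (x : Euc d) (k : Fin m) :
    opA Q b c t (fun y h => u y h - ε * φ y h) x k
      = opA Q b c t u x k - ε * opA Q b c t φ x k := by
  have hud : Differentiable ℝ (fun x => u x k) := (hu k).differentiable (by norm_num)
  have hφd : Differentiable ℝ (fun x => φ x k) := (hφ k).differentiable (by norm_num)
  unfold opA
  have hA : ∑ i, ∑ j, Q k t x i j * pd2 i j (fun y => u y k - ε * φ y k) x
      = (∑ i, ∑ j, Q k t x i j * pd2 i j (fun y => u y k) x)
        - ε * ∑ i, ∑ j, Q k t x i j * pd2 i j (fun y => φ y k) x := by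
    rw [Finset.mul_sum, ← Finset.sum_sub_distrib]
    apply Finset.sum_congr rfl; intro i _
    rw [Finset.mul_sum, ← Finset.sum_sub_distrib]
    apply Finset.sum_congr rfl; intro j _
    rw [pd2_comb (hu k) (hφ k)]
    ring
  have hB : ∑ j, b k t x j * pd j (fun y => u y k - ε * φ y k) x
      = (∑ j, b k t x j * pd j (fun y => u y k) x)
        - ε * ∑ j, b k t x j * pd j (fun y => φ y k) x := by
    rw [Finset.mul_sum, ← Finset.sum_sub_distrib]
    apply Finset.sum_congr rfl; intro j _
    rw [pd_comb hud hφd]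
    ring
  have hC : ∑ h, c t x k h * (u x h - ε * φ x h)
      = (∑ h, c t x k h * u x h) - ε * ∑ h, c t x k h * φ x h := by
    rw [Finset.mul_sum, ← Finset.sum_sub_distrib]
    apply Finset.sum_congr rfl; intro h _
    ring
  simp only []
  rw [hA, hB, hC]
  ring

/-- Proposition 4.4: maximum principle for the elliptic operator
`λ - 𝒜^P(t)`, for `λ > max(M_{t}, λ_{t})`.  The condition `λ > M_{t}` is expressed by the
existence of an upper bound `M < λ` for the row sums of `C^P(t,·)`; the condition
`λ > λ_{t}` by the existence of Lyapunov data for `J = {t}` with constant `< λ`. -/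
theorem statement_11 {d m : ℕ} (hd : 1 ≤ d) (hm : 2 ≤ m)
    (I : Set ℝ) (hI : IsRightHalfline I)
    (Q : Fin m → ℝ → Euc d → Fin d → Fin d → ℝ)
    (b : Fin m → ℝ → Euc d → Fin d → ℝ)
    (c : ℝ → Euc d → Fin m → Fin m → ℝ)
    (hH : Hyp I Q b c)
    (t : ℝ) (ht : t ∈ I) (lam : ℝ)
    (hMlam : ∃ M : ℝ, (∀ x : Euc d, ∀ k, (∑ j, CP c t x k j) ≤ M) ∧ M < lam)
    (hlamt : ∃ φ : Euc d → Fin m → ℝ, ∃ lamt > (0:ℝ),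
      (∀ k, ContDiff ℝ 2 (fun x => φ x k)) ∧
      (∀ x k, 0 < φ x k) ∧
      (∀ k, Tendsto (fun x => φ x k) (cocompact (Euc d)) atTop) ∧
      (∀ x k, opA Q b (CP c) t φ x k ≤ lamt * φ x k) ∧ lamt < lam)
    (u : Euc d → Fin m → ℝ)
    (hu : ∀ k, ContDiff ℝ 2 (fun x => u x k))
    (hub : ∃ K, ∀ (x : Euc d) k, |u x k| ≤ K)
    (hineq : ∀ (x : Euc d) k, lam * u x k - opA Q b (CP c) t u x k ≤ 0) :
    ∀ (x : Euc d) k, u x k ≤ 0 := by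
  obtain ⟨M, hM, hMlt⟩ := hMlam
  obtain ⟨φ, lamt, hlamt0, hφC2, hφpos, hφtend, hφineq, hlamtlt⟩ := hlamt
  obtain ⟨K, hK⟩ := hub
  by_contra hcon
  push_neg at hcon
  obtain ⟨x1, k1, hx1⟩ := hcon
  -- choice of ε
  have hφ1 : 0 < φ x1 k1 := hφpos x1 k1
  set ε : ℝ := u x1 k1 / (2 * φ x1 k1) with hε
  have hε0 : 0 < ε := by
    apply div_pos hx1; positivity
  have hεhalf : ε * φ x1 k1 = u x1 k1 / 2 := by
    rw [hε]; field_simp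
  -- the perturbed function
  set v : Euc d → Fin m → ℝ := fun x k => u x k - ε * φ x k with hv
  have hvC2 : ∀ k, ContDiff ℝ 2 (fun x => v x k) := by
    intro k
    exact (hu k).sub (contDiff_const.mul (hφC2 k))
  have hv1 : 0 < v x1 k1 := by
    have : v x1 k1 = u x1 k1 - ε * φ x1 k1 := rfl
    rw [this, hεhalf]; linarith
  -- existence of a global maximum of v
  have hmne : (Finset.univ : Finset (Fin m)).Nonempty :=
    ⟨⟨0, by omega⟩, Finset.mem_univ _⟩
  set g : Euc d → ℝ := fun x => Finset.univ.sup' hmne (fun k => v x k) with hg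
  have hgc : Continuous g :=
    Continuous.finset_sup'_apply hmne (fun k _ => (hvC2 k).continuous)
  have hgtend : Tendsto g (cocompact (Euc d)) atBot := by
    rw [tendsto_atBot]
    intro bnd
    have hk : ∀ k : Fin m, ∀ᶠ x in cocompact (Euc d), v x k ≤ bnd := by
      intro k
      have h2 : Tendsto (fun x => ε * φ x k) (cocompact (Euc d)) atTop :=
        (hφtend k).const_mul_atTop hε0
      have h3 : Tendsto (fun x => -(ε * φ x k)) (cocompact (Euc d)) atBot :=
        tendsto_neg_atTop_atBot.comp h2
      have h1 : Tendsto (fun x => K - ε * φ x k) (cocompact (Euc d)) atBot := by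
        simpa [sub_eq_add_neg] using tendsto_atBot_add_const_left (cocompact (Euc d)) K h3
      have h4 : ∀ x, v x k ≤ K - ε * φ x k := by
        intro x
        have := abs_le.mp (hK x k)
        have hvx : v x k = u x k - ε * φ x k := rfl
        rw [hvx]; linarith [this.2]
      exact (h1.eventually (eventually_le_atBot bnd)).mono
        (fun x hx => le_trans (h4 x) hx)
    have hall : ∀ᶠ x in cocompact (Euc d), ∀ k, v x k ≤ bnd := eventually_all.mpr hk
    exact hall.mono (fun x hx => Finset.sup'_le hmne _ (fun k _ => hx k))
  obtain ⟨x0, hx0⟩ := hgc.exists_forall_ge hgtend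
  obtain ⟨k0, _, hk0⟩ := Finset.exists_mem_eq_sup' hmne (fun k => v x0 k)
  have hmax : ∀ y k, v y k ≤ v x0 k0 := by
    intro y k
    calc v y k ≤ g y := Finset.le_sup' (fun k => v y k) (Finset.mem_univ k)
      _ ≤ g x0 := hx0 y
      _ = v x0 k0 := hk0
  have hv0pos : 0 < v x0 k0 := lt_of_lt_of_le hv1 (hmax x1 k1)
  have hmax0 : ∀ y, v y k0 ≤ v x0 k0 := fun y => hmax y k0
  -- gradient vanishes at the maximum point
  have hgrad : ∀ j, pd j (fun y => v y k0) x0 = 0 :=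
    fun j => pd_eq_zero_of_max hmax0 j
  -- Hessian is negative semidefinite at the maximum point
  have hhess : ∀ ξ : Fin d → ℝ, ∑ i, ∑ j, ξ i * ξ j * pd2 i j (fun y => v y k0) x0 ≤ 0 := by
    intro ξ
    have := hess_quadform_nonpos (hvC2 k0) hmax0 ((WithLp.equiv 2 (Fin d → ℝ)).symm ξ)
    simpa using this
  -- positive semidefiniteness of Q
  obtain ⟨μ0, hμ0, hQmin⟩ := hH.ellipt {t} (singleton_subset_iff.mpr ht)
    Bornology.isBounded_singleton k0
  have hQpsd : ∀ ξ : Fin d → ℝ, 0 ≤ ∑ i, ∑ j, Q k0 t x0 i j * ξ i * ξ j :=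
    psd_of_minEig (Q k0 t x0) hμ0 (hQmin t rfl x0)
  -- trace term at the maximum
  have htr : ∑ i, ∑ j, Q k0 t x0 i j * pd2 i j (fun y => v y k0) x0 ≤ 0 :=
    trace_QH_nonpos _ _ (fun i j => hH.symm k0 t x0 i j) hQpsd hhess
  -- drift term vanishes
  have hbterm : ∑ j, b k0 t x0 j * pd j (fun y => v y k0) x0 = 0 := by
    apply Finset.sum_eq_zero
    intro j _
    rw [hgrad j, mul_zero]
  -- coupling term
  have hcoup : ∑ h, CP c t x0 k0 h * v x0 h ≤ M * v x0 k0 := by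
    have hstep : ∑ h, CP c t x0 k0 h * v x0 h ≤ ∑ h, CP c t x0 k0 h * v x0 k0 := by
      apply Finset.sum_le_sum
      intro h _
      by_cases hh : k0 = h
      · subst hh; exact le_rfl
      · have hnn : 0 ≤ CP c t x0 k0 h := by
          unfold CP; rw [if_neg hh]; exact abs_nonneg _
        exact mul_le_mul_of_nonneg_left (hmax x0 h) hnn
    calc ∑ h, CP c t x0 k0 h * v x0 h ≤ ∑ h, CP c t x0 k0 h * v x0 k0 := hstep
      _ = (∑ h, CP c t x0 k0 h) * v x0 k0 := by rw [Finset.sum_mul]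
      _ ≤ M * v x0 k0 := mul_le_mul_of_nonneg_right (hM x0 k0) hv0pos.le
  -- bound for opA at v
  have h3 : opA Q b (CP c) t v x0 k0 ≤ M * v x0 k0 := by
    have : opA Q b (CP c) t v x0 k0
        = (∑ i, ∑ j, Q k0 t x0 i j * pd2 i j (fun y => v y k0) x0)
          + (∑ j, b k0 t x0 j * pd j (fun y => v y k0) x0)
          + (∑ h, CP c t x0 k0 h * v x0 h) := rfl
    rw [this, hbterm]
    linarith [htr, hcoup]
  -- linearity of opA
  have hopA : opA Q b (CP c) t v x0 k0
      = opA Q b (CP c) t u x0 k0 - ε * opA Q b (CP c) t φ x0 k0 := by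
    rw [hv]
    exact opA_comb Q b (CP c) t ε hu hφC2 x0 k0
  -- combining
  have h1 : lam * u x0 k0 ≤ opA Q b (CP c) t u x0 k0 := by
    linarith [hineq x0 k0]
  have hb2 : ε * opA Q b (CP c) t φ x0 k0 ≤ ε * (lamt * φ x0 k0) :=
    mul_le_mul_of_nonneg_left (hφineq x0 k0) hε0.le
  have hveq : v x0 k0 = u x0 k0 - ε * φ x0 k0 := rfl
  have hφ0 : 0 < φ x0 k0 := hφpos x0 k0
  -- final contradiction
  nlinarith [mul_pos hε0 hφ0, mul_pos (mul_pos hε0 hφ0) (sub_pos.mpr hlamtlt),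
    hopA, h3, h1, hb2, hv0pos, hMlt]
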